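/- Let σ > 0 and let G be a real Gaussian random variable with mean −σ²/2 and variance σ². Then E[min(1, e^G)] = 2 Φ(−σ/2), where Φ denotes the cumulative distribution function of the standard normal distribution. -/

import Mathlib

open MeasureTheory

/-- The standard normal cumulative distribution function
`Φ(t) = (1/√(2π)) ∫_{-∞}^t e^{-u²/2} du`. -/
noncomputable def stdNormalCDF (t : ℝ) : ℝ :=
  (Real.sqrt (2 * Real.pi))⁻¹ * ∫ u in Set.Iic t, Real.exp (-u ^ 2 / 2)

open scoped NNReal ENNReal in
open Real ProbabilityTheory Set in
lemma gauss_Iic (m a : ℝ) {s : ℝ} (hs : 0 < s) :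
    ∫ g in Set.Iic a, gaussianPDFReal m ((s ^ 2).toNNReal) g =
      stdNormalCDF ((a - m) / s) := by
  have hs2 : ((s ^ 2).toNNReal : ℝ) = s ^ 2 := Real.coe_toNNReal _ (sq_nonneg s)
  set F : ℝ → ℝ := (Set.Iic a).indicator (gaussianPDFReal m ((s ^ 2).toNNReal)) with hF
  have h1 : ∫ g in Set.Iic a, gaussianPDFReal m ((s ^ 2).toNNReal) g = ∫ x, F x := by
    rw [hF, integral_indicator measurableSet_Iic]
  have h2 : (∫ x, F (s * x + m)) = |s⁻¹| • ∫ x, F x := by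
    calc (∫ x, F (s * x + m)) = ∫ x, (fun y => F (y + m)) (s * x) := by simp
    _ = |s⁻¹| • ∫ y, F (y + m) := Measure.integral_comp_mul_left (fun y => F (y + m)) s
    _ = |s⁻¹| • ∫ y, F y := by rw [integral_add_right_eq_self]
  have h3 : ∀ x : ℝ, F (s * x + m)
      = (Set.Iic ((a - m) / s)).indicator (fun u => (s * Real.sqrt (2 * Real.pi))⁻¹ * Real.exp (-u ^ 2 / 2)) x := by
    intro x
    simp only [hF]
    have hmem : (s * x + m ∈ Set.Iic a) ↔ (x ∈ Set.Iic ((a - m) / s)) := by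
      simp only [Set.mem_Iic, le_div_iff₀ hs]
      constructor <;> intro h <;> nlinarith
    have hpdf : gaussianPDFReal m ((s ^ 2).toNNReal) (s * x + m)
        = (s * Real.sqrt (2 * Real.pi))⁻¹ * Real.exp (-x ^ 2 / 2) := by
      rw [gaussianPDFReal]
      rw [hs2]
      have h1 : Real.sqrt (2 * Real.pi * s ^ 2) = s * Real.sqrt (2 * Real.pi) := by
        rw [mul_comm (2 * Real.pi), Real.sqrt_mul (sq_nonneg s), Real.sqrt_sq hs.le]
      rw [h1]
      congr 1
      congr 1
      field_simp
      ring
    by_cases hx : x ∈ Set.Iic ((a - m) / s)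
    · rw [Set.indicator_of_mem (hmem.2 hx), Set.indicator_of_mem hx, hpdf]
    · rw [Set.indicator_of_notMem (fun h => hx (hmem.1 h)), Set.indicator_of_notMem hx]
  have h4 : (∫ x, F (s * x + m)) = (s * Real.sqrt (2 * Real.pi))⁻¹ * ∫ u in Set.Iic ((a - m) / s), Real.exp (-u ^ 2 / 2) := by
    simp_rw [h3]
    rw [integral_indicator measurableSet_Iic, integral_const_mul]
  unfold stdNormalCDF
  rw [h1, ← smul_eq_mul, ← inv_smul_smul₀ (ne_of_gt (abs_pos.2 (inv_ne_zero hs.ne'))) (∫ x, F x), ← h2, h4]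
  rw [abs_of_pos (inv_pos.2 hs), inv_inv, smul_eq_mul, smul_eq_mul, mul_inv]
  rw [← mul_assoc, ← mul_assoc, mul_inv_cancel₀ hs.ne', one_mul]

open scoped NNReal ENNReal in
open Real ProbabilityTheory Set in
lemma pdf_mul_exp {σ : ℝ} (hσ : 0 < σ) (x : ℝ) :
    Real.exp x * gaussianPDFReal (-σ ^ 2 / 2) ((σ ^ 2).toNNReal) x
      = gaussianPDFReal (σ ^ 2 / 2) ((σ ^ 2).toNNReal) x := by
  have hs2 : (((σ ^ 2).toNNReal) : ℝ) = σ ^ 2 := Real.coe_toNNReal _ (sq_nonneg σ)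
  rw [gaussianPDFReal, gaussianPDFReal, hs2, mul_comm (Real.exp x), mul_assoc,
    ← Real.exp_add]
  congr 1
  have hσ2 : σ ^ 2 ≠ 0 := by positivity
  field_simp
  ring

open scoped NNReal ENNReal in
open Real ProbabilityTheory Set in
lemma pdf_neg {σ : ℝ} (x : ℝ) :
    gaussianPDFReal (-σ ^ 2 / 2) ((σ ^ 2).toNNReal) x
      = gaussianPDFReal (σ ^ 2 / 2) ((σ ^ 2).toNNReal) (-x) := by
  rw [gaussianPDFReal, gaussianPDFReal]
  congr 2
  ring

open scoped NNReal ENNReal in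
open Real ProbabilityTheory Set in
/-- if `G ~ N(-σ²/2, σ²)` with `σ > 0`, then
`E[min(1, e^G)] = 2 Φ(-σ/2)`. -/
theorem stmt_6 (σ : ℝ) (hσ : 0 < σ) :
    ∫ g, min 1 (Real.exp g)
        ∂(ProbabilityTheory.gaussianReal (-σ ^ 2 / 2) (Real.toNNReal (σ ^ 2))) =
      2 * stdNormalCDF (-σ / 2) := by
  set m : ℝ := -σ ^ 2 / 2
  set v : ℝ≥0 := (σ ^ 2).toNNReal with hv_def
  have hv : v ≠ 0 := by
    rw [hv_def, Ne, Real.toNNReal_eq_zero, not_le]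
    positivity
  rw [gaussianReal_of_var_ne_zero _ hv]
  have hmeas : Measurable fun x => (gaussianPDFReal m v x).toNNReal :=
    (measurable_gaussianPDFReal m v).real_toNNReal
  have hwd : volume.withDensity (gaussianPDF m v)
      = volume.withDensity (fun x => ((gaussianPDFReal m v x).toNNReal : ℝ≥0∞)) := rfl
  rw [hwd, integral_withDensity_eq_integral_smul hmeas (fun g => min 1 (Real.exp g))]
  have hcongr : (∫ x, (gaussianPDFReal m v x).toNNReal • min 1 (Real.exp x))
      = ∫ x, min 1 (Real.exp x) * gaussianPDFReal m v x := by
    refine integral_congr_ae (Filter.Eventually.of_forall fun x => ?_)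
    show (gaussianPDFReal m v x).toNNReal • min 1 (Real.exp x)
      = min 1 (Real.exp x) * gaussianPDFReal m v x
    rw [NNReal.smul_def, Real.coe_toNNReal _ (gaussianPDFReal_nonneg _ _ _), smul_eq_mul,
      mul_comm]
  rw [hcongr]
  have hInt : Integrable (fun x => min 1 (Real.exp x) * gaussianPDFReal m v x) := by
    refine Integrable.bdd_mul (integrable_gaussianPDFReal m v)
      ((measurable_const.min Real.measurable_exp).aestronglyMeasurable) (c := 1) (Filter.Eventually.of_forall fun x => ?_)
    rw [Real.norm_eq_abs, abs_of_nonneg (le_min zero_le_one (Real.exp_nonneg x))]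
    exact min_le_left _ _
  rw [← intervalIntegral.integral_Iic_add_Ioi (b := 0) hInt.integrableOn hInt.integrableOn]
  have hL : (∫ x in Set.Iic (0:ℝ), min 1 (Real.exp x) * gaussianPDFReal m v x)
      = ∫ x in Set.Iic (0:ℝ), gaussianPDFReal (σ ^ 2 / 2) v x := by
    refine setIntegral_congr_fun measurableSet_Iic fun x hx => ?_
    have hx0 : x ≤ 0 := hx
    rw [min_eq_right (Real.exp_le_one_iff.2 hx0), pdf_mul_exp hσ]
  have hR : (∫ x in Set.Ioi (0:ℝ), min 1 (Real.exp x) * gaussianPDFReal m v x)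
      = ∫ x in Set.Iic (0:ℝ), gaussianPDFReal (σ ^ 2 / 2) v x := by
    have h1 : (∫ x in Set.Ioi (0:ℝ), min 1 (Real.exp x) * gaussianPDFReal m v x)
        = ∫ x in Set.Ioi (0:ℝ), gaussianPDFReal (σ ^ 2 / 2) v (-x) := by
      refine setIntegral_congr_fun measurableSet_Ioi fun x hx => ?_
      have hx0 : (0:ℝ) < x := hx
      rw [min_eq_left (Real.one_le_exp hx0.le), one_mul, pdf_neg]
    rw [h1, integral_comp_neg_Ioi, neg_zero]
  have hkey : (∫ x in Set.Iic (0:ℝ), gaussianPDFReal (σ ^ 2 / 2) v x)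
      = stdNormalCDF (-σ / 2) := by
    have := gauss_Iic (σ ^ 2 / 2) 0 hσ
    rw [hv_def]
    rw [this]
    congr 1
    field_simp
    ring
  rw [hL, hR, hkey]
  ring
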